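/- arXiv:2303.10636 — 2 statements merged into one kernel-verified Lean document; each statement's English description precedes it below -/
import Mathlib

section
/- Under the assumptions that h : ℝ → ℝ is increasing and bi-Lipschitz with constants 0 < m ≤ M, define for probability measures ν with finite first moment: H(x, ν) = ∫ h(x+z) dν(z), Ḡ₀(ν) = inf{x : H(x,ν) ≥ 0}, and G₀(ν) = max(Ḡ₀(ν), 0) = inf{x ≥ 0 : H(x,ν) ≥ 0}. Then for any two such measures ν, ν′: |G₀(ν) − G₀(ν′)| ≤ (1/m) |∫ h(Ḡ₀(ν) + z)(dν(z) − dν′(z))|, and consequently |G₀(ν) − G₀(ν′)| ≤ (M/m) W₁(ν, ν′). -/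
open MeasureTheory

/-- The 1-Wasserstein distance on probability measures on `ℝ`. -/
noncomputable def W1 (μ ν : Measure ℝ) : ℝ :=
  sInf { r : ℝ | ∃ π : Measure (ℝ × ℝ), IsProbabilityMeasure π ∧
    π.map Prod.fst = μ ∧ π.map Prod.snd = ν ∧ r = ∫ p, |p.1 - p.2| ∂π }

/-- `H x ν = ∫ h (x + z) dν(z)`. -/
noncomputable def Hfun (h : ℝ → ℝ) (x : ℝ) (ν : Measure ℝ) : ℝ := ∫ z, h (x + z) ∂ν

/-- `Ḡ₀(ν) = inf {x : H(x, ν) ≥ 0}`. -/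
noncomputable def Gbar (h : ℝ → ℝ) (ν : Measure ℝ) : ℝ :=
  sInf { x : ℝ | 0 ≤ Hfun h x ν }

/-- `G₀(ν) = max (Ḡ₀(ν)) 0 = inf {x ≥ 0 : H(x, ν) ≥ 0}`. -/
noncomputable def G0 (h : ℝ → ℝ) (ν : Measure ℝ) : ℝ := max (Gbar h ν) 0

section aux
variable {h : ℝ → ℝ} {m M : ℝ}

lemma aux_cont (hM : 0 ≤ M) (hb : ∀ x y : ℝ, |h x - h y| ≤ M * |x - y|) :
    Continuous h := by
  have : LipschitzWith (Real.toNNReal M) h := by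
    apply LipschitzWith.of_dist_le_mul
    intro x y
    rw [Real.dist_eq, Real.dist_eq, Real.coe_toNNReal _ hM]
    exact hb x y
  exact this.continuous

lemma aux_int (hM : 0 ≤ M) (hb : ∀ x y : ℝ, |h x - h y| ≤ M * |x - y|)
    (ν : Measure ℝ) [IsProbabilityMeasure ν] (hint : Integrable (fun z : ℝ => |z|) ν)
    (x : ℝ) : Integrable (fun z => h (x + z)) ν := by
  have hc := aux_cont hM hb
  have hg : Integrable (fun z : ℝ => (|h 0| + M * |x|) + M * |z|) ν :=
    (integrable_const _).add (hint.const_mul M)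
  refine hg.mono ((hc.comp (continuous_const.add continuous_id)).aestronglyMeasurable) ?_
  filter_upwards with z
  have h1 := hb (x + z) 0
  simp only [sub_zero] at h1
  have h2 : |x + z| ≤ |x| + |z| := abs_add_le x z
  have h3 : |h (x + z)| - |h 0| ≤ |h (x + z) - h 0| := abs_sub_abs_le_abs_sub _ _
  have h4 : M * |x + z| ≤ M * (|x| + |z|) := mul_le_mul_of_nonneg_left h2 hM
  rw [Real.norm_eq_abs, Real.norm_eq_abs]
  have h5 : (0:ℝ) ≤ |h 0| + M * |x| + M * |z| := by positivity
  rw [abs_of_nonneg h5]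
  nlinarith [abs_nonneg (h (x+z))]

lemma aux_bounds (hm : 0 < m) (hmM : m ≤ M) (hmono : Monotone h)
    (hbil : ∀ x y : ℝ, m * |x - y| ≤ |h x - h y| ∧ |h x - h y| ≤ M * |x - y|)
    (ν : Measure ℝ) [IsProbabilityMeasure ν] (hint : Integrable (fun z : ℝ => |z|) ν)
    {x y : ℝ} (hxy : y ≤ x) :
    m * (x - y) ≤ Hfun h x ν - Hfun h y ν ∧ Hfun h x ν - Hfun h y ν ≤ M * (x - y) := by
  have hM : 0 ≤ M := le_trans hm.le hmM
  have hbu : ∀ a b, |h a - h b| ≤ M * |a - b| := fun a b => (hbil a b).2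
  have hix := aux_int hM hbu ν hint x
  have hiy := aux_int hM hbu ν hint y
  have hsub : Hfun h x ν - Hfun h y ν = ∫ z, (h (x + z) - h (y + z)) ∂ν :=
    (integral_sub hix hiy).symm
  have hpt : ∀ z : ℝ, m * (x - y) ≤ h (x + z) - h (y + z) ∧
      h (x + z) - h (y + z) ≤ M * (x - y) := by
    intro z
    have hmz : h (y + z) ≤ h (x + z) := hmono (by linarith)
    have habs : |h (x + z) - h (y + z)| = h (x + z) - h (y + z) := abs_of_nonneg (by linarith)
    have hd : |(x + z) - (y + z)| = x - y := by
      rw [show (x+z) - (y+z) = x - y by ring]; exact abs_of_nonneg (by linarith)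
    have := hbil (x + z) (y + z)
    rw [habs, hd] at this
    exact this
  constructor
  · rw [hsub]
    calc m * (x - y) = ∫ _ : ℝ, m * (x - y) ∂ν := by simp
    _ ≤ _ := integral_mono (integrable_const _) (hix.sub hiy) fun z => (hpt z).1
  · rw [hsub]
    calc (∫ z, (h (x + z) - h (y + z)) ∂ν) ≤ ∫ _ : ℝ, M * (x - y) ∂ν :=
        integral_mono (hix.sub hiy) (integrable_const _) fun z => (hpt z).2
    _ = M * (x - y) := by simp

lemma aux_lower (hm : 0 < m) (hmM : m ≤ M) (hmono : Monotone h)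
    (hbil : ∀ x y : ℝ, m * |x - y| ≤ |h x - h y| ∧ |h x - h y| ≤ M * |x - y|)
    (ν : Measure ℝ) [IsProbabilityMeasure ν] (hint : Integrable (fun z : ℝ => |z|) ν)
    (x y : ℝ) : m * |x - y| ≤ |Hfun h x ν - Hfun h y ν| := by
  rcases le_total y x with hxy | hxy
  · have hb := aux_bounds hm hmM hmono hbil ν hint hxy
    rw [abs_of_nonneg (by linarith : (0:ℝ) ≤ x - y),
      abs_of_nonneg (by nlinarith : (0:ℝ) ≤ Hfun h x ν - Hfun h y ν)]
    exact hb.1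
  · have hb := aux_bounds hm hmM hmono hbil ν hint hxy
    rw [abs_sub_comm x y, abs_sub_comm (Hfun h x ν),
      abs_of_nonneg (by linarith : (0:ℝ) ≤ y - x),
      abs_of_nonneg (by nlinarith : (0:ℝ) ≤ Hfun h y ν - Hfun h x ν)]
    exact hb.1

lemma aux_zero (hm : 0 < m) (hmM : m ≤ M) (hmono : Monotone h)
    (hbil : ∀ x y : ℝ, m * |x - y| ≤ |h x - h y| ∧ |h x - h y| ≤ M * |x - y|)
    (ν : Measure ℝ) [IsProbabilityMeasure ν] (hint : Integrable (fun z : ℝ => |z|) ν) :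
    Hfun h (Gbar h ν) ν = 0 := by
  have hM : 0 < M := lt_of_lt_of_le hm hmM
  set S := {x : ℝ | 0 ≤ Hfun h x ν} with hSdef
  set E := Hfun h 0 ν with hEdef
  have hB : ∀ {x y : ℝ}, y ≤ x →
      m * (x - y) ≤ Hfun h x ν - Hfun h y ν ∧ Hfun h x ν - Hfun h y ν ≤ M * (x - y) :=
    fun hxy => aux_bounds hm hmM hmono hbil ν hint hxy
  have hne : S.Nonempty := by
    refine ⟨max 0 ((-E)/m), ?_⟩
    have h0 : (0:ℝ) ≤ max 0 ((-E)/m) := le_max_left _ _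
    have hb := (hB h0).1
    have hmx : -E ≤ m * max 0 ((-E)/m) := by
      have hle : (-E)/m ≤ max 0 ((-E)/m) := le_max_right _ _
      calc -E = m * ((-E)/m) := by field_simp
      _ ≤ _ := mul_le_mul_of_nonneg_left hle hm.le
    simp only [hSdef, Set.mem_setOf_eq]
    rw [sub_zero] at hb
    linarith
  have hbdd : BddBelow S := by
    refine ⟨min 0 ((-E)/m), ?_⟩
    intro x hx
    rcases le_or_gt 0 x with hx0 | hx0
    · exact le_trans (min_le_left _ _) hx0
    · have hb := (hB hx0.le).1
      rw [zero_sub] at hb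
      have hxmem : (0:ℝ) ≤ Hfun h x ν := hx
      have : (-E)/m ≤ x := by
        rw [div_le_iff₀ hm]
        nlinarith
      exact le_trans (min_le_right _ _) this
  set g := Gbar h ν with hgdef
  have hgS : g = sInf S := rfl
  have hge : 0 ≤ Hfun h g ν := by
    by_contra hneg
    push_neg at hneg
    set ε := (-Hfun h g ν) / (2 * M) with hεdef
    have hεpos : 0 < ε := by
      apply div_pos (by linarith) (by linarith)
    obtain ⟨x, hxS, hxlt⟩ := exists_lt_of_csInf_lt hne (show sInf S < g + ε by rw [← hgS]; linarith)
    have h1 := (hB hxlt.le).1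
    have hx0 : (0:ℝ) ≤ Hfun h x ν := hxS
    have h2 := (hB (show g ≤ g + ε by linarith)).2
    have hMε : M * (g + ε - g) = -(Hfun h g ν) / 2 := by
      rw [show g + ε - g = ε by ring, hεdef]
      field_simp
    nlinarith
  have hle : Hfun h g ν ≤ 0 := by
    by_contra hpos
    push_neg at hpos
    obtain ⟨x, hxdef⟩ : ∃ x, x = g - Hfun h g ν / (2 * M) := ⟨_, rfl⟩
    have hxg : x < g := by
      have : 0 < Hfun h g ν / (2 * M) := div_pos hpos (by linarith)
      rw [hxdef]; linarith
    have hxns : x ∉ S := by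
      intro hxS
      exact absurd (hgS ▸ csInf_le hbdd hxS) (not_le.mpr hxg)
    have hxneg : Hfun h x ν < 0 := by
      by_contra hc
      push_neg at hc
      exact hxns hc
    have h2 := (hB hxg.le).2
    have hMx : M * (g - x) = Hfun h g ν / 2 := by
      rw [hxdef]
      field_simp
      ring
    linarith [h2, hMx, hpos, hxneg]
  linarith

lemma aux_w1 (hM : 0 < M) (f : ℝ → ℝ) (hfc : Continuous f)
    (hfb : ∀ x y : ℝ, |f x - f y| ≤ M * |x - y|)
    (ν ν' : Measure ℝ) [IsProbabilityMeasure ν] [IsProbabilityMeasure ν']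
    (hint : Integrable (fun z : ℝ => |z|) ν) (hint' : Integrable (fun z : ℝ => |z|) ν')
    (hif : Integrable f ν) (hif' : Integrable f ν') :
    |(∫ z, f z ∂ν) - ∫ z, f z ∂ν'| ≤ M * W1 ν ν' := by
  set D := |(∫ z, f z ∂ν) - ∫ z, f z ∂ν'| with hD
  have key : ∀ r ∈ { r : ℝ | ∃ π : Measure (ℝ × ℝ), IsProbabilityMeasure π ∧
      π.map Prod.fst = ν ∧ π.map Prod.snd = ν' ∧ r = ∫ p, |p.1 - p.2| ∂π }, D / M ≤ r := by
    rintro r ⟨π, hπ, hfst, hsnd, rfl⟩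
    haveI := hπ
    have h1 : (∫ z, f z ∂ν) = ∫ p : ℝ × ℝ, f p.1 ∂π := by
      rw [← hfst, integral_map measurable_fst.aemeasurable hfc.aestronglyMeasurable]
    have h2 : (∫ z, f z ∂ν') = ∫ p : ℝ × ℝ, f p.2 ∂π := by
      rw [← hsnd, integral_map measurable_snd.aemeasurable hfc.aestronglyMeasurable]
    have hi1 : Integrable (fun p : ℝ × ℝ => f p.1) π := by
      have : Integrable f (π.map Prod.fst) := hfst ▸ hif
      exact (integrable_map_measure hfc.aestronglyMeasurable measurable_fst.aemeasurable).mp this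
    have hi2 : Integrable (fun p : ℝ × ℝ => f p.2) π := by
      have : Integrable f (π.map Prod.snd) := hsnd ▸ hif'
      exact (integrable_map_measure hfc.aestronglyMeasurable measurable_snd.aemeasurable).mp this
    have hia1 : Integrable (fun p : ℝ × ℝ => |p.1|) π := by
      have : Integrable (fun z : ℝ => |z|) (π.map Prod.fst) := hfst ▸ hint
      exact (integrable_map_measure (continuous_abs.aestronglyMeasurable)
        measurable_fst.aemeasurable).mp this
    have hia2 : Integrable (fun p : ℝ × ℝ => |p.2|) π := by
      have : Integrable (fun z : ℝ => |z|) (π.map Prod.snd) := hsnd ▸ hint'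
      exact (integrable_map_measure (continuous_abs.aestronglyMeasurable)
        measurable_snd.aemeasurable).mp this
    have hiabs : Integrable (fun p : ℝ × ℝ => |p.1 - p.2|) π := by
      refine (hia1.add hia2).mono
        ((continuous_fst.sub continuous_snd).abs.aestronglyMeasurable) ?_
      filter_upwards with p
      simp only [Pi.add_apply, Real.norm_eq_abs, abs_abs]
      rw [abs_of_nonneg (by positivity : (0:ℝ) ≤ |p.1| + |p.2|)]
      exact abs_sub _ _
    have step : D ≤ M * ∫ p, |p.1 - p.2| ∂π := by
      rw [hD, h1, h2, ← integral_sub hi1 hi2]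
      calc |∫ p : ℝ × ℝ, (f p.1 - f p.2) ∂π| ≤ ∫ p : ℝ × ℝ, |f p.1 - f p.2| ∂π := by
            simpa [Real.norm_eq_abs] using
              norm_integral_le_integral_norm (fun p : ℝ × ℝ => f p.1 - f p.2)
      _ ≤ ∫ p : ℝ × ℝ, M * |p.1 - p.2| ∂π :=
            integral_mono ((hi1.sub hi2).abs) (hiabs.const_mul M) fun p => hfb p.1 p.2
      _ = M * ∫ p, |p.1 - p.2| ∂π := integral_const_mul _ _
    rw [div_le_iff₀ hM]
    linarith
  have hne : Set.Nonempty { r : ℝ | ∃ π : Measure (ℝ × ℝ), IsProbabilityMeasure π ∧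
      π.map Prod.fst = ν ∧ π.map Prod.snd = ν' ∧ r = ∫ p, |p.1 - p.2| ∂π } := by
    refine ⟨∫ p : ℝ × ℝ, |p.1 - p.2| ∂(ν.prod ν'), ν.prod ν', inferInstance, ?_, ?_, rfl⟩
    · simp [Measure.map_fst_prod]
    · simp [Measure.map_snd_prod]
  have hsinf := le_csInf hne key
  rw [div_le_iff₀ hM] at hsinf
  rw [W1]
  linarith

end aux

theorem stmt_3 (h : ℝ → ℝ) (m M : ℝ) (hm : 0 < m) (hmM : m ≤ M)
    (hmono : Monotone h)
    (hbil : ∀ x y : ℝ, m * |x - y| ≤ |h x - h y| ∧ |h x - h y| ≤ M * |x - y|)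
    (ν ν' : Measure ℝ) [IsProbabilityMeasure ν] [IsProbabilityMeasure ν']
    (hint : Integrable (fun z : ℝ => |z|) ν)
    (hint' : Integrable (fun z : ℝ => |z|) ν') :
    |G0 h ν - G0 h ν'| ≤
      (1 / m) * |(∫ z, h (Gbar h ν + z) ∂ν) - ∫ z, h (Gbar h ν + z) ∂ν'| ∧
    |G0 h ν - G0 h ν'| ≤ (M / m) * W1 ν ν' := by
  have hMpos : 0 < M := lt_of_lt_of_le hm hmM
  have hM0 : 0 ≤ M := hMpos.le
  have hbu : ∀ a b, |h a - h b| ≤ M * |a - b| := fun a b => (hbil a b).2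
  have hz : Hfun h (Gbar h ν) ν = 0 := aux_zero hm hmM hmono hbil ν hint
  have hz' : Hfun h (Gbar h ν') ν' = 0 := aux_zero hm hmM hmono hbil ν' hint'
  have hstep : |G0 h ν - G0 h ν'| ≤ |Gbar h ν - Gbar h ν'| := by
    unfold G0
    exact abs_max_sub_max_le_abs _ _ _
  have hlow := aux_lower hm hmM hmono hbil ν' hint' (Gbar h ν) (Gbar h ν')
  rw [hz'] at hlow
  have hDeq : |Hfun h (Gbar h ν) ν' - 0| =
      |Hfun h (Gbar h ν) ν - Hfun h (Gbar h ν) ν'| := by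
    rw [hz, zero_sub, abs_neg, sub_zero]
  rw [hDeq] at hlow
  have e1 : (∫ z, h (Gbar h ν + z) ∂ν) = Hfun h (Gbar h ν) ν := rfl
  have e2 : (∫ z, h (Gbar h ν + z) ∂ν') = Hfun h (Gbar h ν) ν' := rfl
  have first : |G0 h ν - G0 h ν'| ≤
      (1 / m) * |(∫ z, h (Gbar h ν + z) ∂ν) - ∫ z, h (Gbar h ν + z) ∂ν'| := by
    rw [e1, e2]
    rw [one_div, inv_mul_eq_div, le_div_iff₀ hm]
    calc |G0 h ν - G0 h ν'| * m ≤ |Gbar h ν - Gbar h ν'| * m :=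
      mul_le_mul_of_nonneg_right hstep hm.le
    _ = m * |Gbar h ν - Gbar h ν'| := by ring
    _ ≤ _ := hlow
  refine ⟨first, ?_⟩
  have hw : |Hfun h (Gbar h ν) ν - Hfun h (Gbar h ν) ν'| ≤ M * W1 ν ν' := by
    have hfb : ∀ x y : ℝ, |h (Gbar h ν + x) - h (Gbar h ν + y)| ≤ M * |x - y| := by
      intro x y
      have := hbu (Gbar h ν + x) (Gbar h ν + y)
      rwa [show Gbar h ν + x - (Gbar h ν + y) = x - y by ring] at this
    exact aux_w1 hMpos (fun z => h (Gbar h ν + z))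
      ((aux_cont hM0 hbu).comp (continuous_const.add continuous_id))
      hfb ν ν' hint hint' (aux_int hM0 hbu ν hint _) (aux_int hM0 hbu ν' hint' _)
  calc |G0 h ν - G0 h ν'| ≤
      (1 / m) * |(∫ z, h (Gbar h ν + z) ∂ν) - ∫ z, h (Gbar h ν + z) ∂ν'| := first
  _ = (1 / m) * |Hfun h (Gbar h ν) ν - Hfun h (Gbar h ν) ν'| := by rw [e1, e2]
  _ ≤ (1 / m) * (M * W1 ν ν') := by
      apply mul_le_mul_of_nonneg_left hw
      positivity
  _ = (M / m) * W1 ν ν' := by ring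
end

section
/- Deterministic Skorokhod lemma in mean: let f : [0,∞) → ℝ be continuous with f(0) ≥ 0, and define k(t) = sup_{s ≤ t} max(−f(s), 0). Then k is nondecreasing, continuous, k(0) = 0, f(t) + k(t) ≥ 0 for all t ≥ 0, and the Stieltjes integral ∫₀^t (f(s) + k(s)) dk(s) = 0 for all t ≥ 0 (i.e. the measure dk is supported on the set {s : f(s) + k(s) = 0}). -/
open MeasureTheory Set

namespace Skoro

variable {f : ℝ → ℝ}

noncomputable def K (f : ℝ → ℝ) (t : ℝ) : ℝ :=
  sSup ((fun s => max (-f s) 0) '' Set.Icc 0 t)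

lemma g_cont (hf : Continuous f) : Continuous (fun s => max (-f s) 0) :=
  (hf.neg).max continuous_const

lemma bdd (hf : Continuous f) (a b : ℝ) :
    BddAbove ((fun s => max (-f s) 0) '' Set.Icc a b) :=
  (isCompact_Icc.image_of_continuousOn (g_cont hf).continuousOn).bddAbove

lemma K_neg {t : ℝ} (ht : t < 0) : K f t = 0 := by
  unfold K
  rw [Set.Icc_eq_empty (by linarith), Set.image_empty, Real.sSup_empty]

lemma K_zero (hf0 : 0 ≤ f 0) : K f 0 = 0 := by
  unfold K
  rw [Set.Icc_self, Set.image_singleton, csSup_singleton]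
  exact max_eq_right (by linarith)

lemma le_K (hf : Continuous f) {s t : ℝ} (h0 : 0 ≤ s) (hst : s ≤ t) :
    max (-f s) 0 ≤ K f t :=
  le_csSup (bdd hf 0 t) ⟨s, ⟨h0, hst⟩, rfl⟩

lemma K_nonneg (hf : Continuous f) {t : ℝ} (ht : 0 ≤ t) : 0 ≤ K f t :=
  le_trans (le_max_right (-f 0) 0) (le_K hf le_rfl ht)

lemma K_mono (hf : Continuous f) : Monotone (K f) := by
  intro a b hab
  rcases lt_or_ge a 0 with ha | ha
  · rw [K_neg ha]
    rcases lt_or_ge b 0 with hb | hb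
    · rw [K_neg hb]
    · exact K_nonneg hf hb
  · exact csSup_le_csSup (bdd hf 0 b) ⟨max (-f 0) 0, ⟨0, ⟨le_rfl, ha⟩, rfl⟩⟩
      (Set.image_mono (Set.Icc_subset_Icc le_rfl hab))

lemma K_max0 (hf0 : 0 ≤ f 0) (t : ℝ) : K f (max t 0) = K f t := by
  rcases le_or_gt 0 t with h | h
  · rw [max_eq_left h]
  · rw [max_eq_right h.le, K_zero hf0, K_neg h]

lemma K_le (hf : Continuous f) {a b c : ℝ} (h0 : 0 ≤ a) (hab : a ≤ b)
    (hc : ∀ s ∈ Set.Icc a b, max (-f s) 0 ≤ c) :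
    K f b ≤ max (K f a) c := by
  unfold K
  rw [← Set.Icc_union_Icc_eq_Icc h0 hab, Set.image_union,
    csSup_union (bdd hf 0 a) ⟨max (-f 0) 0, ⟨0, ⟨le_rfl, h0⟩, rfl⟩⟩ (bdd hf a b)
      ⟨max (-f a) 0, ⟨a, ⟨le_rfl, hab⟩, rfl⟩⟩]
  exact max_le_max le_rfl (csSup_le ⟨max (-f a) 0, ⟨a, ⟨le_rfl, hab⟩, rfl⟩⟩
    (fun x ⟨s, hs, hsx⟩ => hsx ▸ hc s hs))

lemma K_cont (hf : Continuous f) (hf0 : 0 ≤ f 0) : Continuous (K f) := by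
  rw [Metric.continuous_iff]
  intro x ε hε
  rcases lt_or_ge x 0 with hx | hx
  · refine ⟨-x, by linarith, fun t ht => ?_⟩
    rw [Real.dist_eq] at ht
    have ht0 : t < 0 := by
      rcases abs_lt.mp ht with ⟨h1, h2⟩; linarith
    rw [K_neg ht0, K_neg hx]
    simpa using hε
  · -- x ≥ 0
    have hg : ContinuousAt (fun s => max (-f s) 0) x := (g_cont hf).continuousAt
    rcases Metric.continuousAt_iff.mp hg (ε/4) (by linarith) with ⟨δ, hδ, hδ'⟩
    refine ⟨δ, hδ, fun t ht => ?_⟩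
    rw [Real.dist_eq] at ht ⊢
    set t' := max t 0 with ht'def
    have hKt : K f t = K f t' := (K_max0 hf0 t).symm
    have ht'x : |t' - x| < δ := by
      have : |t' - x| ≤ |t - x| := by
        rw [ht'def]
        rcases le_or_gt 0 t with h | h
        · rw [max_eq_left h]
        · rw [max_eq_right h.le]
          rw [abs_of_nonpos (by linarith : (0:ℝ) - x ≤ 0),
            abs_of_nonpos (by linarith : t - x ≤ 0)]
          linarith
      linarith
    have ht'0 : 0 ≤ t' := le_max_right t 0
    rw [hKt]
    rcases le_or_gt x t' with hcase | hcase
    · -- t' ≥ x : K t' ≤ K x + ε/2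
      have hb : K f t' ≤ max (K f x) (max (-f x) 0 + ε/4) := by
        apply K_le hf hx hcase
        intro s hs
        have hsx : |s - x| < δ := by
          rw [abs_lt] at ht'x ⊢
          constructor <;> [linarith [hs.1]; linarith [hs.2, ht'x.2]]
        have := hδ' hsx
        rw [Real.dist_eq, abs_lt] at this
        linarith [this.2]
      have hgx : max (-f x) 0 ≤ K f x := le_K hf hx le_rfl
      have h1 : K f t' ≤ K f x + ε/4 := le_trans hb (by
        apply max_le (by linarith) (by linarith))
      have h2 : K f x ≤ K f t' := K_mono hf hcase
      rw [abs_lt]; constructor <;> linarith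
    · -- t' < x : K x ≤ K t' + ε/2
      have hb : K f x ≤ max (K f t') (max (-f x) 0 + ε/4) := by
        apply K_le hf ht'0 hcase.le
        intro s hs
        have hsx : |s - x| < δ := by
          rw [abs_lt] at ht'x ⊢
          constructor <;> [linarith [hs.1, ht'x.1]; linarith [hs.2]]
        have := hδ' hsx
        rw [Real.dist_eq, abs_lt] at this
        linarith [this.2]
      have hgt' : max (-f t') 0 ≤ K f t' := le_K hf ht'0 le_rfl
      have hgxt : max (-f x) 0 ≤ max (-f t') 0 + ε/4 := by
        have := hδ' (show |t' - x| < δ from ht'x)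
        rw [Real.dist_eq, abs_lt] at this
        linarith [this.1]
      have h1 : K f x ≤ K f t' + ε/2 := le_trans hb (by
        apply max_le (by linarith) (by linarith))
      have h2 : K f t' ≤ K f x := K_mono hf hcase.le
      rw [abs_lt]; constructor <;> linarith

lemma key (hf : Continuous f) (hf0 : 0 ≤ f 0) {x : ℝ} (hx : 0 ≤ x)
    (hpos : 0 < f x + K f x) :
    ∃ ε > 0, K f (x + ε) ≤ K f (x - ε) := by
  have hgK : max (-f x) 0 ≤ K f x := le_K hf hx le_rfl
  rcases lt_or_eq_of_le hgK with h1 | h1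
  · -- strict case
    set m := (max (-f x) 0 + K f x) / 2 with hm
    have hm1 : max (-f x) 0 < m := by rw [hm]; linarith
    have hm2 : m < K f x := by rw [hm]; linarith
    have hg : ContinuousAt (fun s => max (-f s) 0) x := (g_cont hf).continuousAt
    rcases Metric.continuousAt_iff.mp hg (m - max (-f x) 0) (by linarith) with ⟨δ, hδ, hδ'⟩
    refine ⟨δ/2, by linarith, ?_⟩
    set a := max (x - δ/2) 0 with ha
    have ha0 : 0 ≤ a := le_max_right _ _
    have hab : a ≤ x + δ/2 := max_le (by linarith) (by linarith)
    have hKa : K f a = K f (x - δ/2) := K_max0 hf0 _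
    have hb : K f (x + δ/2) ≤ max (K f a) m := by
      apply K_le hf ha0 hab
      intro s hs
      have hsx : |s - x| < δ := by
        rw [abs_lt]
        have h1 : x - δ/2 ≤ a := le_max_left _ _
        constructor <;> [linarith [hs.1]; linarith [hs.2]]
      have := hδ' hsx
      rw [Real.dist_eq, abs_lt] at this
      linarith [this.2]
    have hxle : K f x ≤ K f (x + δ/2) := K_mono hf (by linarith)
    rcases max_cases (K f a) m with ⟨he, _⟩ | ⟨he, _⟩
    · rw [he] at hb; rw [← hKa]; exact hb
    · rw [he] at hb; linarith
  · -- max (-f x) 0 = K f x ; show K f x = 0, f x > 0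
    have hKx0 : K f x = 0 := by
      by_contra h
      have hKpos : 0 < K f x := lt_of_le_of_ne (K_nonneg hf hx) (Ne.symm h)
      have : max (-f x) 0 < K f x := max_lt (by linarith) hKpos
      rw [h1] at this; exact lt_irrefl _ this
    have hfx : 0 < f x := by rw [hKx0] at hpos; linarith
    rcases Metric.continuousAt_iff.mp hf.continuousAt (f x) hfx with ⟨δ, hδ, hδ'⟩
    refine ⟨δ/2, by linarith, ?_⟩
    set a := max (x - δ/2) 0 with ha
    have ha0 : 0 ≤ a := le_max_right _ _
    have hab : a ≤ x + δ/2 := max_le (by linarith) (by linarith)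
    have hKa : K f a = K f (x - δ/2) := K_max0 hf0 _
    have hb : K f (x + δ/2) ≤ max (K f a) 0 := by
      apply K_le hf ha0 hab
      intro s hs
      have hsx : |s - x| < δ := by
        rw [abs_lt]
        have h1' : x - δ/2 ≤ a := le_max_left _ _
        constructor <;> [linarith [hs.1]; linarith [hs.2]]
      have := hδ' hsx
      rw [Real.dist_eq, abs_lt] at this
      have : 0 < f s := by linarith [this.1]
      simp [max_eq_right (by linarith : -f s ≤ (0:ℝ))]
    rw [max_eq_left (K_nonneg hf ha0)] at hb
    rw [← hKa]; exact hb

end Skoro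

theorem stmt_5 (f : ℝ → ℝ) (hf : Continuous f) (hf0 : 0 ≤ f 0)
    (k : ℝ → ℝ)
    (hk : ∀ t : ℝ, k t = sSup ((fun s => max (-f s) 0) '' Set.Icc 0 t)) :
    Monotone k ∧ Continuous k ∧ k 0 = 0 ∧ (∀ t : ℝ, 0 ≤ t → 0 ≤ f t + k t) ∧
    ∀ μ : MeasureTheory.Measure ℝ,
      (∀ a b : ℝ, a ≤ b → μ (Set.Ioc a b) = ENNReal.ofReal (k b - k a)) →
      (μ { s : ℝ | 0 ≤ s ∧ f s + k s ≠ 0 } = 0 ∧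
        ∀ t : ℝ, 0 ≤ t → ∫ s in Set.Ioc 0 t, (f s + k s) ∂μ = 0) := by
  have hkK : k = Skoro.K f := funext hk
  subst hkK
  have hnonneg : ∀ t : ℝ, 0 ≤ t → 0 ≤ f t + Skoro.K f t := by
    intro t ht
    have h1 := Skoro.le_K hf ht (le_refl t)
    have h2 := le_max_left (-f t) 0
    linarith
  refine ⟨Skoro.K_mono hf, Skoro.K_cont hf hf0, Skoro.K_zero hf0, hnonneg, ?_⟩
  intro μ hμ
  have hA : μ { s : ℝ | 0 ≤ s ∧ f s + Skoro.K f s ≠ 0 } = 0 := by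
    apply measure_null_of_locally_null
    intro x hx
    obtain ⟨hx0, hne⟩ := hx
    have hpos : 0 < f x + Skoro.K f x := lt_of_le_of_ne (hnonneg x hx0) (Ne.symm hne)
    obtain ⟨ε, hε, hle⟩ := Skoro.key hf hf0 hx0 hpos
    refine ⟨Set.Ioo (x - ε) (x + ε),
      mem_nhdsWithin_of_mem_nhds (isOpen_Ioo.mem_nhds ⟨by linarith, by linarith⟩), ?_⟩
    refine le_antisymm ?_ zero_le
    calc μ (Set.Ioo (x - ε) (x + ε)) ≤ μ (Set.Ioc (x - ε) (x + ε)) :=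
          measure_mono Set.Ioo_subset_Ioc_self
      _ = ENNReal.ofReal (Skoro.K f (x + ε) - Skoro.K f (x - ε)) := hμ _ _ (by linarith)
      _ = 0 := by rw [ENNReal.ofReal_eq_zero]; linarith
  refine ⟨hA, ?_⟩
  intro t ht
  apply integral_eq_zero_of_ae
  have hmeas : MeasurableSet { s : ℝ | f s + Skoro.K f s ≠ 0 } :=
    (isOpen_ne_fun (hf.add (Skoro.K_cont hf hf0)) continuous_const).measurableSet
  have hnull : μ.restrict (Set.Ioc 0 t) { s : ℝ | f s + Skoro.K f s ≠ 0 } = 0 := by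
    rw [Measure.restrict_apply hmeas]
    refine le_antisymm (le_trans (measure_mono ?_) hA.le) zero_le
    rintro s ⟨hs1, hs2⟩
    exact ⟨hs2.1.le, hs1⟩
  rw [Filter.EventuallyEq, ae_iff]
  simpa using hnull
end
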